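/- Fix d, r_c > 0, D_min ∈ ℝ^d, and I ∈ ℕ_{>0}^d. Suppose a particle's old position x¹ satisfies ι_I(w) = ⌊(x¹ − D_min)/r_c⌋ + 1̲ (it belongs to cell w) and its new position x² satisfies |x² − x¹| ≤ r_c (Euclidean norm). Then the vector α̲ := ⌊(x² − D_min)/r_c⌋ − ι_I(w) + 3̲ has all components in {1,2,3}, so α := ι₃⁻¹(α̲) ∈ {1,…,3^d}. That is, after moving at most r_c, the particle lies in one of the 3^d storage compartments (the cell itself or a direct neighbor). -/

import Mathlib

def prodIio {d : ℕ} (I : Fin d → ℕ) (l : Fin d) : ℕ := ∏ t ∈ Finset.Iio l, I t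

/-- vectorial index of a scalar index `j` (mixed-radix digits, offset by 1). -/
def iotaVec {d : ℕ} (I : Fin d → ℕ) (j : ℕ) (l : Fin d) : ℕ :=
  if l.val = d - 1 then (j - 1) / prodIio I l + 1
  else (j - 1) / prodIio I l - (j - 1) / (prodIio I l * I l) * I l + 1

/-- scalar index of a vectorial index. -/
def iotaInv {d : ℕ} (I : Fin d → ℕ) (v : Fin d → ℕ) : ℕ :=
  1 + ∑ l, (v l - 1) * prodIio I l

lemma geom_aux : ∀ d : ℕ, 1 + ∑ i ∈ Finset.range d, 2 * 3 ^ i = 3 ^ d := by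
  intro d
  induction d with
  | zero => simp
  | succ n ih => rw [Finset.sum_range_succ, ← add_assoc, ih]; ring

theorem stmt12 (d : ℕ) (rc : ℝ) (hrc : 0 < rc) (Dmin : Fin d → ℝ)
    (I : Fin d → ℕ) (hI : ∀ w, 1 ≤ I w) (w : ℕ)
    (x1 x2 : EuclideanSpace ℝ (Fin d))
    (hcell : ∀ l, (iotaVec I w l : ℤ) = ⌊(x1 l - Dmin l) / rc⌋ + 1)
    (hmove : ‖x2 - x1‖ ≤ rc) :
    (∀ l, 1 ≤ ⌊(x2 l - Dmin l) / rc⌋ - (iotaVec I w l : ℤ) + 3 ∧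
        ⌊(x2 l - Dmin l) / rc⌋ - (iotaVec I w l : ℤ) + 3 ≤ 3) ∧
    1 ≤ iotaInv (fun _ : Fin d => 3)
        (fun l => (⌊(x2 l - Dmin l) / rc⌋ - (iotaVec I w l : ℤ) + 3).toNat) ∧
    iotaInv (fun _ : Fin d => 3)
        (fun l => (⌊(x2 l - Dmin l) / rc⌋ - (iotaVec I w l : ℤ) + 3).toNat) ≤ 3 ^ d := by
  have hcomp : ∀ l, |x2 l - x1 l| ≤ rc := by
    intro l
    have h1 : ‖(x2 - x1) l‖ ≤ ‖x2 - x1‖ := by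
      rw [EuclideanSpace.norm_eq]
      have : |((x2 - x1) l)| = Real.sqrt (‖(x2 - x1) l‖ ^ 2) := by
        rw [Real.sqrt_sq_eq_abs]; simp
      rw [Real.norm_eq_abs, this]
      apply Real.sqrt_le_sqrt
      exact Finset.single_le_sum (f := fun i => ‖(x2 - x1) i‖ ^ 2)
        (fun i _ => sq_nonneg _) (Finset.mem_univ l)
    have h2 : (x2 - x1) l = x2 l - x1 l := rfl
    rw [h2, Real.norm_eq_abs] at h1
    exact h1.trans hmove
  have key : ∀ l, 1 ≤ ⌊(x2 l - Dmin l) / rc⌋ - (iotaVec I w l : ℤ) + 3 ∧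
      ⌊(x2 l - Dmin l) / rc⌋ - (iotaVec I w l : ℤ) + 3 ≤ 3 := by
    intro l
    set t := (x1 l - Dmin l) / rc with ht
    set s := (x2 l - Dmin l) / rc with hs
    have habs : |s - t| ≤ 1 := by
      have : s - t = (x2 l - x1 l) / rc := by rw [hs, ht]; ring
      rw [this, abs_div, abs_of_pos hrc]
      rw [div_le_one hrc]
      exact hcomp l
    rw [abs_le] at habs
    have hlo : ⌊t⌋ - 1 ≤ ⌊s⌋ := by
      have : t - 1 ≤ s := by linarith [habs.1]
      calc ⌊t⌋ - 1 = ⌊t - (1:ℤ)⌋ := by rw [Int.floor_sub_intCast]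
        _ ≤ ⌊s⌋ := Int.floor_le_floor (by push_cast; linarith)
    have hhi : ⌊s⌋ ≤ ⌊t⌋ + 1 := by
      calc ⌊s⌋ ≤ ⌊t + (1:ℤ)⌋ := Int.floor_le_floor (by push_cast; linarith [habs.2])
        _ = ⌊t⌋ + 1 := by rw [Int.floor_add_intCast]
    have hc := hcell l
    rw [← ht] at hc
    omega
  refine ⟨key, Nat.le_add_right _ _, ?_⟩
  unfold iotaInv
  have hprod : ∀ l : Fin d, prodIio (fun _ : Fin d => 3) l = 3 ^ l.val := by
    intro l
    simp [prodIio, Fin.card_Iio]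
  calc 1 + ∑ l : Fin d, ((⌊(x2 l - Dmin l) / rc⌋ - (iotaVec I w l : ℤ) + 3).toNat - 1)
        * prodIio (fun _ : Fin d => 3) l
      ≤ 1 + ∑ l : Fin d, 2 * 3 ^ l.val := by
        gcongr 1 + ∑ l : Fin d, ?_ with l
        rw [hprod]
        gcongr
        have := (key l).2
        omega
    _ = 1 + ∑ i ∈ Finset.range d, 2 * 3 ^ i := by
        rw [Fin.sum_univ_eq_sum_range (fun i => 2 * 3 ^ i)]
    _ = 3 ^ d := geom_aux d
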